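/- Let a_0, a_1 ∈ ℝ, B = (b_1,…,b_{M-1})ᵀ ∈ ℝ^{M-1}, and suppose the vector V̂ = (v_1,…,v_{M-1})ᵀ ∈ ℝ^{M-1} satisfies v_k = a_1 + a_0·(b/M)·k - (b/π)² Σ_{j=1}^{M-1} (b_j/j²) sin(πjk/M) for all 1 ≤ k ≤ M-1. Then the coefficients are recovered by b_j = j² Σ_{k=1}^{M-1} sin(πjk/M)·( (2a_1π²)/(Mb²) + (2a_0π² k)/(bM²) - (2π²/(Mb²))·v_k ) for all 1 ≤ j ≤ M-1. -/

import Mathlib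

open Real Finset in
lemma cos_geom_sum (M : ℕ) (hM : 1 ≤ M) (n : ℤ) :
    ∑ k ∈ Finset.range M, Real.cos (Real.pi * (n : ℝ) * (k : ℝ) / (M : ℝ)) =
      if (2 * (M : ℤ)) ∣ n then (M : ℝ) else if (2 : ℤ) ∣ n then 0 else 1 := by
  have hM0 : (M : ℝ) ≠ 0 := Nat.cast_ne_zero.mpr (by omega)
  set θ : ℝ := Real.pi * (n : ℝ) / (M : ℝ) with hθ
  have key : ∀ m : ℤ, θ = m * (2 * Real.pi) → n = 2 * M * m := by
    intro m h
    rw [hθ] at h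
    field_simp at h
    have h2 : Real.pi * (n : ℝ) = Real.pi * ((2 * M * m : ℤ) : ℝ) := by
      push_cast; linear_combination π * h
    exact_mod_cast mul_left_cancel₀ Real.pi_ne_zero h2
  by_cases hdvd : (2 * (M : ℤ)) ∣ n
  · obtain ⟨m, hm⟩ := hdvd
    rw [if_pos ⟨m, hm⟩]
    have h1 : ∀ k ∈ Finset.range M, Real.cos (Real.pi * (n : ℝ) * (k : ℝ) / (M : ℝ)) = 1 := by
      intro k _
      have : Real.pi * (n : ℝ) * (k : ℝ) / (M : ℝ) = ((m * k : ℤ) : ℝ) * (2 * Real.pi) := by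
        have hn : (n : ℝ) = 2 * M * m := by exact_mod_cast congrArg (Int.cast : ℤ → ℝ) hm
        rw [hn]; push_cast; field_simp
      rw [this, Real.cos_int_mul_two_pi]
    rw [Finset.sum_congr rfl h1, Finset.sum_const, Finset.card_range, nsmul_eq_mul, mul_one]
  · rw [if_neg hdvd]
    set ω : ℂ := Complex.exp (θ * Complex.I) with hω
    have hterm : ∀ k : ℕ, Real.cos (Real.pi * (n : ℝ) * (k : ℝ) / (M : ℝ)) = (ω ^ k).re := by
      intro k
      have harg : Real.pi * (n : ℝ) * (k : ℝ) / (M : ℝ) = θ * k := by rw [hθ]; ring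
      rw [harg, hω, ← Complex.exp_nat_mul]
      have : ((k : ℂ) * ((θ : ℂ) * Complex.I)) = ((θ * k : ℝ) : ℂ) * Complex.I := by
        push_cast; ring
      rw [this, Complex.exp_ofReal_mul_I_re]
    have hsum : ∑ k ∈ Finset.range M, Real.cos (Real.pi * (n : ℝ) * (k : ℝ) / (M : ℝ))
        = (∑ k ∈ Finset.range M, ω ^ k).re := by
      rw [Complex.re_sum]; exact Finset.sum_congr rfl fun k _ => hterm k
    have hω1 : ω ≠ 1 := by
      intro h
      rw [hω, Complex.exp_eq_one_iff] at h
      obtain ⟨m, hm⟩ := h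
      have hm' : (θ : ℂ) * Complex.I = ((m * (2 * Real.pi) : ℝ) : ℂ) * Complex.I := by
        rw [hm]; push_cast; ring
      have : θ = m * (2 * Real.pi) := by
        exact_mod_cast mul_right_cancel₀ Complex.I_ne_zero hm'
      exact hdvd ⟨m, key m this⟩
    have hMc : (M : ℂ) ≠ 0 := Nat.cast_ne_zero.mpr (by omega)
    have hωM : ω ^ M = Complex.exp ((n : ℂ) * (Real.pi * Complex.I)) := by
      rw [hω, ← Complex.exp_nat_mul]
      congr 1
      rw [hθ]; push_cast; field_simp
    rw [hsum, geom_sum_eq hω1]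
    by_cases hev : (2 : ℤ) ∣ n
    · rw [if_pos hev]
      obtain ⟨m, hm⟩ := hev
      have : ω ^ M = 1 := by
        rw [hωM, Complex.exp_eq_one_iff]
        exact ⟨m, by rw [hm]; push_cast; ring⟩
      rw [this]; simp
    · rw [if_neg hev]
      have hodd : Odd n := Int.not_even_iff_odd.mp (fun he => hev (even_iff_two_dvd.mp he))
      have hm1 : ω ^ M = -1 := by
        rw [hωM]
        have : Complex.exp ((n : ℂ) * (Real.pi * Complex.I))
            = Complex.exp ((Real.pi : ℂ) * Complex.I) ^ n := Complex.exp_int_mul _ n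
        rw [this, Complex.exp_pi_mul_I]
        exact Odd.neg_one_zpow hodd
      rw [hm1]
      have hre : ω.re = Real.cos θ := by rw [hω, Complex.exp_ofReal_mul_I_re]
      have him : ω.im = Real.sin θ := by rw [hω, Complex.exp_ofReal_mul_I_im]
      have hcos1 : Real.cos θ ≠ 1 := by
        intro h
        rw [Real.cos_eq_one_iff] at h
        obtain ⟨m, hm⟩ := h
        exact hev ⟨M * m, by have := key m hm.symm; linarith⟩
      have hns : Complex.normSq (ω - 1) = 2 - 2 * Real.cos θ := by
        rw [Complex.normSq_apply, Complex.sub_re, Complex.sub_im, hre, him,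
          Complex.one_re, Complex.one_im]
        nlinarith [Real.sin_sq_add_cos_sq θ]
      have h2 : (2 : ℝ) - 2 * Real.cos θ ≠ 0 := fun h => hcos1 (by linarith)
      rw [Complex.div_re, hns]
      have hz : ((-1 : ℂ) - 1).re = -2 := by norm_num
      have hz' : ((-1 : ℂ) - 1).im = 0 := by norm_num
      rw [hz, hz', Complex.sub_re, Complex.sub_im, hre, him, Complex.one_re, Complex.one_im]
      field_simp
      ring




lemma not_two_mul_dvd (M : ℤ) (hM : 1 ≤ M) (n : ℤ) (h0 : n ≠ 0)
    (hn : -(2 * M) < n) (hn' : n < 2 * M) : ¬ (2 * M) ∣ n := by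
  rintro ⟨m, hm⟩
  rcases lt_trichotomy m 0 with h | h | h
  · nlinarith
  · subst h; simp at hm; exact h0 hm
  · nlinarith

lemma cos_sum_Ico (M : ℕ) (hM : 1 ≤ M) (n : ℤ) :
    ∑ k ∈ Finset.Ico 1 M, Real.cos (Real.pi * (n : ℝ) * (k : ℝ) / (M : ℝ)) =
      (if (2 * (M : ℤ)) ∣ n then (M : ℝ) else if (2 : ℤ) ∣ n then 0 else 1) - 1 := by
  have hins : Finset.range M = insert 0 (Finset.Ico 1 M) := by
    ext x; simp [Finset.mem_range, Finset.mem_Ico]; omega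
  have := cos_geom_sum M hM n
  rw [hins, Finset.sum_insert (by simp)] at this
  simp only [Nat.cast_zero, mul_zero, zero_div, Real.cos_zero] at this
  linarith

lemma sin_orth (M : ℕ) (hM : 2 ≤ M) (i j : ℕ) (hi1 : 1 ≤ i) (hi2 : i ≤ M - 1)
    (hj1 : 1 ≤ j) (hj2 : j ≤ M - 1) :
    ∑ k ∈ Finset.Ico 1 M,
      Real.sin (Real.pi * (i : ℝ) * (k : ℝ) / (M : ℝ)) *
      Real.sin (Real.pi * (j : ℝ) * (k : ℝ) / (M : ℝ)) =
      if i = j then (M : ℝ) / 2 else 0 := by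
  have hM1 : 1 ≤ M := by omega
  have hprod : ∀ k : ℕ,
      Real.sin (Real.pi * (i : ℝ) * (k : ℝ) / (M : ℝ)) *
      Real.sin (Real.pi * (j : ℝ) * (k : ℝ) / (M : ℝ)) =
      (Real.cos (Real.pi * (((i : ℤ) - j : ℤ) : ℝ) * (k : ℝ) / (M : ℝ))
        - Real.cos (Real.pi * (((i : ℤ) + j : ℤ) : ℝ) * (k : ℝ) / (M : ℝ))) / 2 := by
    intro k
    set A := Real.pi * (i : ℝ) * (k : ℝ) / (M : ℝ)
    set C := Real.pi * (j : ℝ) * (k : ℝ) / (M : ℝ)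
    have h1 : Real.pi * (((i : ℤ) - j : ℤ) : ℝ) * (k : ℝ) / (M : ℝ) = A - C := by
      push_cast; ring
    have h2 : Real.pi * (((i : ℤ) + j : ℤ) : ℝ) * (k : ℝ) / (M : ℝ) = A + C := by
      push_cast; ring
    rw [h1, h2, Real.cos_sub_cos]
    have : (A - C + (A + C)) / 2 = A := by ring
    rw [this]
    have : (A - C - (A + C)) / 2 = -C := by ring
    rw [this, Real.sin_neg]
    ring
  rw [Finset.sum_congr rfl fun k _ => hprod k, ← Finset.sum_div, Finset.sum_sub_distrib,
    cos_sum_Ico M hM1 ((i : ℤ) - j), cos_sum_Ico M hM1 ((i : ℤ) + j)]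
  by_cases hij : i = j
  · subst hij
    rw [if_pos rfl]
    have hd1 : (2 * (M : ℤ)) ∣ ((i : ℤ) - i) := by simp
    have hiz : (i : ℤ) < M := by exact_mod_cast (by omega : i < M)
    have hi1z : (1 : ℤ) ≤ i := by exact_mod_cast hi1
    have hd2 : ¬ (2 * (M : ℤ)) ∣ ((i : ℤ) + i) :=
      not_two_mul_dvd M (by exact_mod_cast hM1) _ (by omega) (by omega) (by omega)
    have hd2' : (2 : ℤ) ∣ ((i : ℤ) + i) := ⟨i, by ring⟩
    rw [if_pos hd1, if_neg hd2, if_pos hd2']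
    ring
  · rw [if_neg hij]
    have hiz : (i : ℤ) < M := by exact_mod_cast (by omega : i < M)
    have hjz : (j : ℤ) < M := by exact_mod_cast (by omega : j < M)
    have hi1z : (1 : ℤ) ≤ i := by exact_mod_cast hi1
    have hj1z : (1 : ℤ) ≤ j := by exact_mod_cast hj1
    have h3 : (i : ℤ) ≠ j := fun h => hij (by exact_mod_cast h)
    have hMz : (1 : ℤ) ≤ M := by exact_mod_cast hM1
    have hd1 : ¬ (2 * (M : ℤ)) ∣ ((i : ℤ) - j) :=
      not_two_mul_dvd M hMz _ (by omega) (by omega) (by omega)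
    have hd2 : ¬ (2 * (M : ℤ)) ∣ ((i : ℤ) + j) :=
      not_two_mul_dvd M hMz _ (by omega) (by omega) (by omega)
    rw [if_neg hd1, if_neg hd2]
    have hpar : (2 : ℤ) ∣ ((i : ℤ) - j) ↔ (2 : ℤ) ∣ ((i : ℤ) + j) := by omega
    by_cases he : (2 : ℤ) ∣ ((i : ℤ) - j)
    · rw [if_pos he, if_pos (hpar.mp he)]; ring
    · rw [if_neg he, if_neg (fun h => he (hpar.mpr h))]; ring


/-- Recovery of the sine coefficients `b_j` from the grid values
`v_k = a₁ + a₀(b/M)k - (b/π)² ∑_{j=1}^{M-1} (b_j/j²) sin(πjk/M)`. -/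
theorem stmt_5 (M : ℕ) (hM : 2 ≤ M) (b : ℝ) (hb : 0 < b)
    (a₀ a₁ : ℝ) (B v : ℕ → ℝ)
    (hv : ∀ k : ℕ, 1 ≤ k → k ≤ M - 1 →
      v k = a₁ + a₀ * (b / (M : ℝ)) * (k : ℝ)
        - (b / Real.pi) ^ 2 * ∑ j ∈ Finset.Ico 1 M,
            (B j / (j : ℝ) ^ 2) * Real.sin (Real.pi * (j : ℝ) * (k : ℝ) / (M : ℝ))) :
    ∀ j : ℕ, 1 ≤ j → j ≤ M - 1 →
      B j = (j : ℝ) ^ 2 * ∑ k ∈ Finset.Ico 1 M,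
        Real.sin (Real.pi * (j : ℝ) * (k : ℝ) / (M : ℝ)) *
          ((2 * a₁ * Real.pi ^ 2) / ((M : ℝ) * b ^ 2)
            + (2 * a₀ * Real.pi ^ 2 * (k : ℝ)) / (b * (M : ℝ) ^ 2)
            - (2 * Real.pi ^ 2 / ((M : ℝ) * b ^ 2)) * v k) := by
  intro j hj1 hj2
  have hM0 : (M : ℝ) ≠ 0 := Nat.cast_ne_zero.mpr (by omega)
  have hb0 : b ≠ 0 := ne_of_gt hb
  have hpi : Real.pi ≠ 0 := Real.pi_ne_zero
  have hj0 : (j : ℝ) ≠ 0 := Nat.cast_ne_zero.mpr (by omega)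
  have key : ∀ k ∈ Finset.Ico 1 M,
      Real.sin (Real.pi * (j : ℝ) * (k : ℝ) / (M : ℝ)) *
        ((2 * a₁ * Real.pi ^ 2) / ((M : ℝ) * b ^ 2)
          + (2 * a₀ * Real.pi ^ 2 * (k : ℝ)) / (b * (M : ℝ) ^ 2)
          - (2 * Real.pi ^ 2 / ((M : ℝ) * b ^ 2)) * v k)
      = ∑ i ∈ Finset.Ico 1 M, (2 / (M : ℝ)) * (B i / (i : ℝ) ^ 2) *
          (Real.sin (Real.pi * (j : ℝ) * (k : ℝ) / (M : ℝ)) *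
           Real.sin (Real.pi * (i : ℝ) * (k : ℝ) / (M : ℝ))) := by
    intro k hk
    rw [Finset.mem_Ico] at hk
    rw [hv k hk.1 (by omega)]
    have hrhs : ∑ i ∈ Finset.Ico 1 M, (2 / (M : ℝ)) * (B i / (i : ℝ) ^ 2) *
          (Real.sin (Real.pi * (j : ℝ) * (k : ℝ) / (M : ℝ)) *
           Real.sin (Real.pi * (i : ℝ) * (k : ℝ) / (M : ℝ)))
        = (2 / (M : ℝ)) * Real.sin (Real.pi * (j : ℝ) * (k : ℝ) / (M : ℝ)) *
            ∑ i ∈ Finset.Ico 1 M,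
              (B i / (i : ℝ) ^ 2) * Real.sin (Real.pi * (i : ℝ) * (k : ℝ) / (M : ℝ)) := by
      rw [Finset.mul_sum]
      exact Finset.sum_congr rfl fun i _ => by ring
    rw [hrhs]
    field_simp
    ring
  rw [Finset.sum_congr rfl key, Finset.sum_comm]
  have inner : ∀ i ∈ Finset.Ico 1 M,
      (∑ k ∈ Finset.Ico 1 M, (2 / (M : ℝ)) * (B i / (i : ℝ) ^ 2) *
          (Real.sin (Real.pi * (j : ℝ) * (k : ℝ) / (M : ℝ)) *
           Real.sin (Real.pi * (i : ℝ) * (k : ℝ) / (M : ℝ))))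
      = if j = i then (2 / (M : ℝ)) * (B i / (i : ℝ) ^ 2) * ((M : ℝ) / 2) else 0 := by
    intro i hi
    rw [Finset.mem_Ico] at hi
    rw [← Finset.mul_sum, sin_orth M hM j i hj1 hj2 hi.1 (by omega)]
    split_ifs with h
    · rfl
    · simp
  rw [Finset.sum_congr rfl inner, Finset.sum_ite_eq]
  rw [if_pos (Finset.mem_Ico.mpr ⟨hj1, by omega⟩)]
  field_simp
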